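/- If every proper χ(G)-vertex coloring of a graph G has all color classes of odd size, then every proper χ(G)-vertex coloring of G is complete, i.e., every color class is a maximal independent set. -/
import Mathlib


open Finset

-- The vertex label induced by an edge coloring: `twinLabel G s v = Σ_{e ∈ E_v} s e` in `ZMod k`.
open scoped Classical in
noncomputable def twinLabel {V : Type*} [Fintype V] (G : SimpleGraph V) {k : ℕ}
    (s : Sym2 V → ZMod k) (v : V) : ZMod k :=
  ∑ e ∈ G.incidenceFinset v, s e

/-- `s` is an improper twin `k`-edge coloring of `G`: the induced vertex labeling
is a proper vertex coloring. -/
def IsImproperTwin {V : Type*} [Fintype V] (G : SimpleGraph V) (k : ℕ)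
    (s : Sym2 V → ZMod k) : Prop :=
  ∀ ⦃u v : V⦄, G.Adj u v → twinLabel G s u ≠ twinLabel G s v

/-- The improper twin chromatic index: the least `k ≥ 2` admitting an improper twin
`k`-edge coloring. -/
noncomputable def improperTwinIndex {V : Type*} [Fintype V] (G : SimpleGraph V) : ℕ :=
  sInf {k | 2 ≤ k ∧ ∃ s : Sym2 V → ZMod k, IsImproperTwin G k s}

theorem stmt_14 {V : Type*} [Fintype V] (G : SimpleGraph V)
    (n : ℕ) (hn : G.chromaticNumber = n)
    (hodd : ∀ C : G.Coloring (Fin n), ∀ i : Fin n, Odd (C.colorClass i).ncard) :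
    ∀ C : G.Coloring (Fin n), ∀ i : Fin n, ∀ v : V,
      C v ≠ i → ∃ u : V, G.Adj v u ∧ C u = i := by
  classical
  intro C i v hvi
  by_contra h
  push_neg at h
  -- Move v to color i: still a proper coloring.
  have valid : ∀ ⦃a b : V⦄, G.Adj a b →
      (fun u => if u = v then i else C u) a ≠ (fun u => if u = v then i else C u) b := by
    intro a b hab
    by_cases ha : a = v <;> by_cases hb : b = v <;> simp [ha, hb] at hab ⊢
    · subst ha; exact fun hC => h b hab hC.symm
    · subst hb; exact fun hC => h a hab.symm hC
    · exact C.valid hab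
  let C' : G.Coloring (Fin n) := SimpleGraph.Coloring.mk (fun u => if u = v then i else C u) (fun hab => valid hab)
  have hC'u : ∀ u, C' u = if u = v then i else C u := fun u => rfl
  have hclass : C'.colorClass i = insert v (C.colorClass i) := by
    ext u
    simp only [SimpleGraph.Coloring.colorClass, Set.mem_setOf_eq, Set.mem_insert_iff, hC'u]
    by_cases hu : u = v <;> simp [hu]
  have hv : v ∉ C.colorClass i := hvi
  have hcard : (C'.colorClass i).ncard = (C.colorClass i).ncard + 1 := by
    rw [hclass, Set.ncard_insert_of_notMem hv (Set.toFinite _)]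
  have h1 := hodd C i
  have h2 := hodd C' i
  rw [hcard] at h2
  obtain ⟨a, ha⟩ := h1
  obtain ⟨b, hb⟩ := h2
  omega
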